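/- For any modal formula A, the following are equivalent: (1) A is a theorem of MNDF; (2) A is valid in all transitive MND-frames; (3) A is valid in all finite transitive MND-frames. -/

import Mathlib

/-- Modal formulas: variables, ⊥, →, □. -/
inductive Fml : Type
  | var : ℕ → Fml
  | bot : Fml
  | imp : Fml → Fml → Fml
  | box : Fml → Fml
  deriving DecidableEq

namespace Fml

/-- ¬A is an abbreviation for A → ⊥. -/
def neg (A : Fml) : Fml := imp A bot

/-- ⊤ is an abbreviation for ¬⊥. -/
def top : Fml := neg bot

/-- A ∧ B is an abbreviation for ¬(A → ¬B). -/
def and (A B : Fml) : Fml := neg (imp A (neg B))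

/-- Uniform substitution. -/
def subst (σ : ℕ → Fml) : Fml → Fml
  | var n => σ n
  | bot => bot
  | imp A B => imp (subst σ A) (subst σ B)
  | box A => box (subst σ A)

end Fml

/-- A formula is a propositional tautology if it is true under every valuation
that respects ⊥ and →, treating variables and boxed formulas as atoms. -/
def IsTautology (A : Fml) : Prop :=
  ∀ val : Fml → Bool,
    (val Fml.bot = false) →
    (∀ B C : Fml, val (Fml.imp B C) = (!(val B) || val C)) →
    val A = true

/-- Provability in the extension of the logic MN by the axioms in `Ax`:
axioms are all propositional tautologies and the members of `Ax`; the rules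
are Modus Ponens, Necessitation, and RM. -/
inductive MNProv (Ax : Fml → Prop) : Fml → Prop
  | taut {A : Fml} : IsTautology A → MNProv Ax A
  | ax {A : Fml} : Ax A → MNProv Ax A
  | mp {A B : Fml} : MNProv Ax (A.imp B) → MNProv Ax A → MNProv Ax B
  | nec {A : Fml} : MNProv Ax A → MNProv Ax A.box
  | rm {A B : Fml} : MNProv Ax (A.imp B) → MNProv Ax (A.box.imp B.box)

/-- The axiom P : ¬□⊥. -/
def AxP : Fml → Prop := fun A => A = (Fml.box Fml.bot).neg

/-- The axiom scheme D : ¬(□B ∧ □¬B). -/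
def AxD : Fml → Prop := fun A => ∃ B : Fml, A = ((B.box).and (B.neg.box)).neg

/-- The axiom scheme 4 : □B → □□B. -/
def AxF : Fml → Prop := fun A => ∃ B : Fml, A = B.box.imp B.box.box

def MN : Fml → Prop := MNProv (fun _ => False)
def MNP : Fml → Prop := MNProv AxP
def MND : Fml → Prop := MNProv AxD
def MNF : Fml → Prop := MNProv AxF
def MNPF : Fml → Prop := MNProv (fun A => AxP A ∨ AxF A)
def MNDF : Fml → Prop := MNProv (fun A => AxD A ∨ AxF A)

/-- An MN-frame: a nonempty set `W` together with a relation between worlds and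
nonempty subsets of `W` satisfying monotonicity. -/
structure MNFrame (W : Type*) where
  nonempty : Nonempty W
  rel : W → Set W → Prop
  rel_nonempty : ∀ (x : W) (V : Set W), rel x V → V.Nonempty
  mono : ∀ (x : W) (V U : Set W), rel x V → V ⊆ U → rel x U

/-- `Sat` is a satisfaction relation on the MN-frame `F`. -/
structure IsSat {W : Type*} (F : MNFrame W) (Sat : W → Fml → Prop) : Prop where
  bot : ∀ x : W, ¬ Sat x Fml.bot
  imp : ∀ (x : W) (A B : Fml), Sat x (A.imp B) ↔ (Sat x A → Sat x B)
  box : ∀ (x : W) (A : Fml), Sat x A.box ↔ ∀ V : Set W, F.rel x V → ∃ y ∈ V, Sat y A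

/-- A formula is valid in an MN-frame if it is satisfied at every world under
every satisfaction relation on the frame. -/
def Valid {W : Type*} (F : MNFrame W) (A : Fml) : Prop :=
  ∀ Sat : W → Fml → Prop, IsSat F Sat → ∀ x : W, Sat x A

/-- Transitivity of an MN-frame. -/
def MNFrame.IsTransitive {W : Type*} (F : MNFrame W) : Prop :=
  ∀ (x : W) (V : Set W) (U : W → Set W),
    F.rel x V → (∀ y ∈ V, F.rel y (U y)) → F.rel x (⋃ y ∈ V, U y)

/-- MNP-frames: every world is related to some subset. -/
def MNFrame.IsMNP {W : Type*} (F : MNFrame W) : Prop :=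
  ∀ x : W, ∃ V : Set W, F.rel x V

/-- MND-frames: every world is related to `V` or to its complement. -/
def MNFrame.IsMND {W : Type*} (F : MNFrame W) : Prop :=
  ∀ (x : W) (V : Set W), F.rel x V ∨ F.rel x Vᶜ

/-! ### Auxiliary development for stmt10 -/

namespace Stmt10

open Fml

/-- Boolean valuations respecting `⊥` and `→`. -/
def Good (v : Fml → Bool) : Prop :=
  v Fml.bot = false ∧ ∀ B C : Fml, v (Fml.imp B C) = (!(v B) || v C)

/-- Valuations making all MNDF theorems true. -/
def ThmTrue (v : Fml → Bool) : Prop := ∀ T, MNDF T → v T = true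

lemma good_neg {v : Fml → Bool} (hg : Good v) (X : Fml) : v X.neg = !(v X) := by
  show v (X.imp Fml.bot) = !(v X)
  rw [hg.2, hg.1, Bool.or_false]

lemma good_and {v : Fml → Bool} (hg : Good v) (X Y : Fml) :
    v (X.and Y) = (v X && v Y) := by
  show v ((X.imp Y.neg).neg) = _
  rw [good_neg hg, hg.2, good_neg hg]
  cases v X <;> cases v Y <;> rfl

lemma val_mp {v : Fml → Bool} (hg : Good v) {P Q : Fml}
    (h1 : v (P.imp Q) = true) (h2 : v P = true) : v Q = true := by
  rw [hg.2, h2] at h1; simpa using h1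

/-! #### Basic MNDF derivations -/

lemma mndf_taut {B : Fml} (h : IsTautology B) : MNDF B := MNProv.taut h
lemma mndf_mp {B C : Fml} (h1 : MNDF (B.imp C)) (h2 : MNDF B) : MNDF C := MNProv.mp h1 h2
lemma mndf_axD (B : Fml) : MNDF ((B.box.and (B.neg.box)).neg) := MNProv.ax (Or.inl ⟨B, rfl⟩)
lemma mndf_ax4 (B : Fml) : MNDF (B.box.imp B.box.box) := MNProv.ax (Or.inr ⟨B, rfl⟩)
lemma mndf_rm {B C : Fml} (h : MNDF (B.imp C)) : MNDF (B.box.imp C.box) := MNProv.rm h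
lemma mndf_nec {B : Fml} (h : MNDF B) : MNDF B.box := MNProv.nec h

lemma tautT1 (X Y : Fml) : IsTautology (X.imp (Y.imp X)) := by
  intro v h1 h2; simp only [h2]; cases v X <;> cases v Y <;> rfl

lemma tautT2 (X Y Z : Fml) :
    IsTautology ((X.imp (Y.imp Z)).imp (Y.imp (X.imp Z))) := by
  intro v h1 h2; simp only [h2]; cases v X <;> cases v Y <;> cases v Z <;> rfl

lemma tautT3 (X Z : Fml) : IsTautology ((X.imp (X.imp Z)).imp (X.imp Z)) := by
  intro v h1 h2; simp only [h2]; cases v X <;> cases v Z <;> rfl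

lemma tautT4 (A : Fml) : IsTautology ((A.neg.imp A).imp A) := by
  intro v h1 h2; simp only [Fml.neg, h2, h1]; cases v A <;> rfl

/-! #### From tautological refutations to provability -/

lemma foldr_true_iff {v : Fml → Bool} (hg : Good v) :
    ∀ (L : List Fml) (C : Fml),
      (v (L.foldr Fml.imp C) = true) ↔ ((∀ f ∈ L, v f = true) → v C = true) := by
  intro L
  induction L with
  | nil => intro C; simp
  | cons f L ih =>
    intro C
    rw [List.foldr_cons, hg.2]
    cases hvf : v f
    · simp [hvf]
    · simp [hvf, ih C]

lemma peel (A : Fml) :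
    ∀ L : List Fml, (∀ f ∈ L, MNDF f ∨ f = A.neg) →
      MNDF (Fml.imp A.neg (L.foldr Fml.imp A)) → MNDF A := by
  intro L
  induction L with
  | nil => intro _ h; exact mndf_mp (mndf_taut (tautT4 A)) h
  | cons f L ih =>
    intro hmem h
    rw [List.foldr_cons] at h
    rcases hmem f List.mem_cons_self with hf | rfl
    · have h2 := mndf_mp (mndf_taut (tautT2 A.neg f (L.foldr Fml.imp A))) h
      exact ih (fun g hg => hmem g (List.mem_cons_of_mem _ hg)) (mndf_mp h2 hf)
    · have h2 := mndf_mp (mndf_taut (tautT3 A.neg (L.foldr Fml.imp A))) h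
      exact ih (fun g hg => hmem g (List.mem_cons_of_mem _ hg)) h2

lemma finsat_S {A : Fml} (hA : ¬ MNDF A) :
    ∀ L : List Fml, (∀ f ∈ L, MNDF f ∨ f = A.neg) →
      ∃ v, Good v ∧ ∀ f ∈ L, v f = true := by
  intro L hL
  by_contra hno
  have htaut : IsTautology (L.foldr Fml.imp A) := by
    intro v h1 h2
    rw [foldr_true_iff ⟨h1, h2⟩]
    intro hall
    exact absurd ⟨v, ⟨h1, h2⟩, hall⟩ hno
  have h0 : MNDF (L.foldr Fml.imp A) := mndf_taut htaut
  have h1 : MNDF (Fml.imp A.neg (L.foldr Fml.imp A)) :=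
    mndf_mp (mndf_taut (tautT1 (L.foldr Fml.imp A) A.neg)) h0
  exact hA (peel A L hL h1)

/-! #### Lindenbaum / compactness -/

def FinSat (S : Set Fml) : Prop :=
  ∀ L : List Fml, (∀ f ∈ L, f ∈ S) → ∃ v, Good v ∧ ∀ f ∈ L, v f = true

lemma finsat_union_chain {c : Set (Set Fml)} (hchain : IsChain (· ⊆ ·) c)
    (hne : c.Nonempty) (h : ∀ t ∈ c, FinSat t) : FinSat (⋃₀ c) := by
  intro L hL
  have key : ∃ t ∈ c, ∀ f ∈ L, f ∈ t := by
    clear h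
    induction L with
    | nil => exact ⟨hne.choose, hne.choose_spec, by simp⟩
    | cons f L ih =>
      obtain ⟨t, htc, ht⟩ := ih (fun g hg => hL g (List.mem_cons_of_mem _ hg))
      obtain ⟨s, hsc, hfs⟩ := hL f List.mem_cons_self
      rcases eq_or_ne s t with rfl | hst
      · exact ⟨s, hsc, by
          intro g hg
          rcases List.mem_cons.1 hg with rfl | hg
          · exact hfs
          · exact ht g hg⟩
      rcases hchain hsc htc hst with hsub | hsub
      · exact ⟨t, htc, by
          intro g hg
          rcases List.mem_cons.1 hg with rfl | hg
          · exact hsub hfs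
          · exact ht g hg⟩
      · exact ⟨s, hsc, by
          intro g hg
          rcases List.mem_cons.1 hg with rfl | hg
          · exact hfs
          · exact hsub (ht g hg)⟩
  obtain ⟨t, htc, ht⟩ := key
  exact h t htc L ht

lemma exists_val {A : Fml} (hA : ¬ MNDF A) :
    ∃ v : Fml → Bool, Good v ∧ ThmTrue v ∧ v A = false := by
  classical
  set S : Set Fml := {f | MNDF f ∨ f = A.neg} with hSdef
  have hSfin : FinSat S := fun L hL => finsat_S hA L hL
  obtain ⟨M, hSM, hMmax⟩ :=
    zorn_subset_nonempty {T : Set Fml | S ⊆ T ∧ FinSat T}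
      (by
        intro c hc hchain hne
        refine ⟨⋃₀ c, ⟨?_, ?_⟩, fun s hs => Set.subset_sUnion_of_mem hs⟩
        · obtain ⟨t, ht⟩ := hne
          exact (hc ht).1.trans (Set.subset_sUnion_of_mem ht)
        · exact finsat_union_chain hchain hne (fun t ht => (hc ht).2))
      S ⟨Set.Subset.rfl, hSfin⟩
  have hfin : FinSat M := hMmax.1.2
  have hmax' : ∀ X, X ∉ M → ¬ FinSat (insert X M) := by
    intro X hX hF
    exact hX (hMmax.2 ⟨hMmax.1.1.trans (Set.subset_insert _ _), hF⟩
      (Set.subset_insert _ _) (Set.mem_insert _ _))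
  have htot : ∀ X : Fml, X ∈ M ∨ X.neg ∈ M := by
    intro X
    by_contra hcon
    push_neg at hcon
    obtain ⟨h1, h2⟩ := hcon
    have hF1 := hmax' X h1
    have hF2 := hmax' X.neg h2
    unfold FinSat at hF1 hF2
    push_neg at hF1 hF2
    obtain ⟨L1, hL1mem, hL1⟩ := hF1
    obtain ⟨L2, hL2mem, hL2⟩ := hF2
    set K := L1.filter (fun f => f ≠ X) ++ L2.filter (fun f => f ≠ X.neg) with hK
    have hKmem : ∀ f ∈ K, f ∈ M := by
      intro f hf
      rcases List.mem_append.1 hf with hf | hf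
      · obtain ⟨hfL, hfne⟩ := List.mem_filter.1 hf
        rcases Set.mem_insert_iff.1 (hL1mem f hfL) with rfl | hfM
        · simp at hfne
        · exact hfM
      · obtain ⟨hfL, hfne⟩ := List.mem_filter.1 hf
        rcases Set.mem_insert_iff.1 (hL2mem f hfL) with rfl | hfM
        · simp at hfne
        · exact hfM
    obtain ⟨v, hgv, hvK⟩ := hfin K hKmem
    cases hvX : v X
    · obtain ⟨f, hf, hfne⟩ := hL2 v hgv
      apply hfne
      rcases eq_or_ne f X.neg with rfl | hne
      · rw [good_neg hgv, hvX]; rfl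
      · exact hvK f (List.mem_append.2 (Or.inr (List.mem_filter.2 ⟨hf, by simpa using hne⟩)))
    · obtain ⟨f, hf, hfne⟩ := hL1 v hgv
      apply hfne
      rcases eq_or_ne f X with rfl | hne
      · exact hvX
      · exact hvK f (List.mem_append.2 (Or.inl (List.mem_filter.2 ⟨hf, by simpa using hne⟩)))
  have hpair : ∀ X : Fml, X ∈ M → X.neg ∈ M → False := by
    intro X h1 h2
    obtain ⟨v, hg, hv⟩ := hfin [X, X.neg] (by
      intro f hf
      rcases List.mem_cons.1 hf with rfl | hf
      · exact h1
      · rcases List.mem_cons.1 hf with rfl | hf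
        · exact h2
        · simp at hf)
    have e1 := hv X (by simp)
    have e2 := hv X.neg (by simp)
    rw [good_neg hg, e1] at e2
    simp at e2
  have hbot : Fml.bot ∉ M := by
    intro h
    obtain ⟨v, hg, hv⟩ := hfin [Fml.bot] (by intro f hf; simp at hf; subst hf; exact h)
    have := hv Fml.bot (by simp)
    rw [hg.1] at this
    simp at this
  have hmp : ∀ X Y : Fml, X ∈ M → (X.imp Y) ∈ M → Y ∈ M := by
    intro X Y hX hXY
    by_contra hY
    rcases htot Y with hY' | hYn
    · exact hY hY'
    obtain ⟨v, hg, hv⟩ := hfin [X, X.imp Y, Y.neg] (by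
      intro f hf
      rcases List.mem_cons.1 hf with rfl | hf
      · exact hX
      rcases List.mem_cons.1 hf with rfl | hf
      · exact hXY
      rcases List.mem_cons.1 hf with rfl | hf
      · exact hYn
      simp at hf)
    have e1 := hv X (by simp)
    have e2 := hv (X.imp Y) (by simp)
    have e3 := hv Y.neg (by simp)
    have e4 := val_mp hg e2 e1
    rw [good_neg hg, e4] at e3
    simp at e3
  have himpM : ∀ X Y : Fml, (X.imp Y) ∈ M ↔ (X ∈ M → Y ∈ M) := by
    intro X Y
    constructor
    · intro h hX; exact hmp X Y hX h
    · intro h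
      by_contra hni
      rcases htot (X.imp Y) with hi | hn
      · exact hni hi
      rcases htot X with hX | hXn
      · have hY := h hX
        obtain ⟨v, hg, hv⟩ := hfin [Y, (X.imp Y).neg] (by
          intro f hf
          rcases List.mem_cons.1 hf with rfl | hf
          · exact hY
          rcases List.mem_cons.1 hf with rfl | hf
          · exact hn
          simp at hf)
        have e1 := hv Y (by simp)
        have e2 := hv (X.imp Y).neg (by simp)
        rw [good_neg hg, hg.2] at e2
        rw [e1] at e2
        simp at e2
      · obtain ⟨v, hg, hv⟩ := hfin [X.neg, (X.imp Y).neg] (by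
          intro f hf
          rcases List.mem_cons.1 hf with rfl | hf
          · exact hXn
          rcases List.mem_cons.1 hf with rfl | hf
          · exact hn
          simp at hf)
        have e1 := hv X.neg (by simp)
        have e2 := hv (X.imp Y).neg (by simp)
        rw [good_neg hg] at e1
        rw [good_neg hg, hg.2] at e2
        have : v X = false := by cases h : v X <;> simp [h] at e1 ⊢
        rw [this] at e2
        simp at e2
  refine ⟨fun X => if X ∈ M then true else false, ⟨if_neg hbot, ?_⟩, ?_, ?_⟩
  · intro B C
    show (if (B.imp C) ∈ M then true else false) =
      (!(if B ∈ M then true else false) || (if C ∈ M then true else false))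
    by_cases hBC : (B.imp C) ∈ M
    · rw [if_pos hBC]
      have := (himpM B C).1 hBC
      by_cases hB : B ∈ M
      · rw [if_pos hB, if_pos (this hB)]; rfl
      · rw [if_neg hB]; rfl
    · rw [if_neg hBC]
      have : ¬ (B ∈ M → C ∈ M) := fun h => hBC ((himpM B C).2 h)
      push_neg at this
      rw [if_pos this.1, if_neg this.2]; rfl
  · intro T hT
    exact if_pos (hSM (Or.inl hT))
  · exact if_neg (fun hAM => hpair A hAM (hSM (Or.inr rfl)))

lemma provable_of_allval (B : Fml)
    (h : ∀ v, Good v → ThmTrue v → v B = true) : MNDF B := by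
  by_contra hB
  obtain ⟨v, hg, ht, hf⟩ := exists_val hB
  rw [h v hg ht] at hf
  simp at hf

/-! #### Semantic corollaries about canonical valuations -/

lemma val_box4 {v : Fml → Bool} (hg : Good v) (ht : ThmTrue v) {X : Fml}
    (h : v X.box = true) : v X.box.box = true :=
  val_mp hg (ht _ (mndf_ax4 X)) h

lemma clash {v : Fml → Bool} (hg : Good v) (ht : ThmTrue v) {X Y : Fml}
    (hX : v X.box = true) (hY : v Y.box = true) :
    ∃ w, Good w ∧ ThmTrue w ∧ w X = true ∧ w Y = true := by
  by_contra hcon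
  push_neg at hcon
  have himp : MNDF (X.imp Y.neg) := by
    apply provable_of_allval
    intro w hgw htw
    rw [hgw.2, good_neg hgw]
    cases hwx : w X
    · rfl
    · cases hwy : w Y
      · rfl
      · exact absurd hwy (hcon w hgw htw hwx)
  have h1 : v (Y.neg.box) = true := val_mp hg (ht _ (mndf_rm himp)) hX
  have hD := ht _ (mndf_axD Y)
  rw [good_neg hg, good_and hg, hY, h1] at hD
  simp at hD

lemma box_nonempty {v : Fml → Bool} (hg : Good v) (ht : ThmTrue v) {X : Fml}
    (hX : v X.box = true) : ∃ w, Good w ∧ ThmTrue w ∧ w X = true := by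
  obtain ⟨w, hgw, htw, hwX, _⟩ := clash hg ht hX hX
  exact ⟨w, hgw, htw, hwX⟩

lemma box_mono_sem {v : Fml → Bool} (hg : Good v) (ht : ThmTrue v) {X C : Fml}
    (hX : v X.box = true)
    (h : ∀ w, Good w → ThmTrue w → w X = true → w C = true) : v C.box = true := by
  have himp : MNDF (X.imp C) := by
    apply provable_of_allval
    intro w hgw htw
    rw [hgw.2]
    cases hwx : w X
    · rfl
    · rw [h w hgw htw hwx]; rfl
  exact val_mp hg (ht _ (mndf_rm himp)) hX

lemma box_of_all {v : Fml → Bool} (hg : Good v) (ht : ThmTrue v) {C : Fml}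
    (h : ∀ w, Good w → ThmTrue w → w C = true) : v C.box = true :=
  ht _ (mndf_nec (provable_of_allval C h))

/-! #### Subformulas -/

def subf : Fml → List Fml
  | .var n => [.var n]
  | .bot => [.bot]
  | .imp B C => .imp B C :: (subf B ++ subf C)
  | .box B => .box B :: subf B

lemma self_mem_subf (B : Fml) : B ∈ subf B := by
  cases B <;> simp [subf]

lemma mem_subf_imp : ∀ {Z B C : Fml}, Fml.imp B C ∈ subf Z → B ∈ subf Z ∧ C ∈ subf Z := by
  intro Z
  induction Z with
  | var n => intro B C h; simp [subf] at h
  | bot => intro B C h; simp [subf] at h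
  | imp P Q ihP ihQ =>
    intro B C h
    simp only [subf, List.mem_cons, List.mem_append] at h ⊢
    rcases h with h | h | h
    · obtain ⟨rfl, rfl⟩ := Fml.imp.inj h
      exact ⟨Or.inr (Or.inl (self_mem_subf B)), Or.inr (Or.inr (self_mem_subf C))⟩
    · obtain ⟨h1, h2⟩ := ihP h
      exact ⟨Or.inr (Or.inl h1), Or.inr (Or.inl h2)⟩
    · obtain ⟨h1, h2⟩ := ihQ h
      exact ⟨Or.inr (Or.inr h1), Or.inr (Or.inr h2)⟩
  | box P ih =>
    intro B C h
    simp only [subf, List.mem_cons] at h ⊢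
    rcases h with h | h
    · exact absurd h (by simp)
    · obtain ⟨h1, h2⟩ := ih h
      exact ⟨Or.inr h1, Or.inr h2⟩

lemma mem_subf_box : ∀ {Z B : Fml}, Fml.box B ∈ subf Z → B ∈ subf Z := by
  intro Z
  induction Z with
  | var n => intro B h; simp [subf] at h
  | bot => intro B h; simp [subf] at h
  | imp P Q ihP ihQ =>
    intro B h
    simp only [subf, List.mem_cons, List.mem_append] at h ⊢
    rcases h with h | h | h
    · exact absurd h (by simp)
    · exact Or.inr (Or.inl (ihP h))
    · exact Or.inr (Or.inr (ihQ h))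
  | box P ih =>
    intro B h
    simp only [subf, List.mem_cons] at h ⊢
    rcases h with h | h
    · obtain rfl := Fml.box.inj h
      exact Or.inr (self_mem_subf B)
    · exact Or.inr (ih h)

/-! #### The finite canonical model -/

variable (A : Fml)

def CW : Type := {v : Fml → Bool // Good v ∧ ThmTrue v}

def cwSetoid : Setoid (CW) where
  r v w := ∀ B ∈ subf A,
    v.1 B = w.1 B ∧ v.1 B.box = w.1 B.box ∧ v.1 B.box.box = w.1 B.box.box
  iseqv := by
    refine ⟨fun v B hB => ⟨rfl, rfl, rfl⟩, fun h B hB => ?_, fun h1 h2 B hB => ?_⟩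
    · obtain ⟨a, b, c⟩ := h B hB
      exact ⟨a.symm, b.symm, c.symm⟩
    · obtain ⟨a, b, c⟩ := h1 B hB
      obtain ⟨a', b', c'⟩ := h2 B hB
      exact ⟨a.trans a', b.trans b', c.trans c'⟩

def FW := Quotient (cwSetoid A)

noncomputable def vbar (x : FW A) : Fml → Bool := (Quotient.out x).1

lemma vbar_good (x : FW A) : Good (vbar A x) := (Quotient.out x).2.1
lemma vbar_thm (x : FW A) : ThmTrue (vbar A x) := (Quotient.out x).2.2

lemma vbar_mk (v : CW) {B : Fml} (hB : B ∈ subf A) :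
    vbar A (Quotient.mk (cwSetoid A) v) B = v.1 B ∧
    vbar A (Quotient.mk (cwSetoid A) v) B.box = v.1 B.box ∧
    vbar A (Quotient.mk (cwSetoid A) v) B.box.box = v.1 B.box.box := by
  have h := Quotient.exact (Quotient.out_eq (Quotient.mk (cwSetoid A) v))
  exact h B hB

def tset (X : Fml) : Set (FW A) := {x | vbar A x X = true}

/-- Witness formulas used as generators of the finite canonical neighborhoods. -/
def Wit (X : Fml) : Prop := X ∈ subf A ∨ ∃ B ∈ subf A, X = B.box

lemma vbar_mk_wit (v : CW) {X : Fml} (hX : Wit A X) :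
    vbar A (Quotient.mk (cwSetoid A) v) X = v.1 X ∧
    vbar A (Quotient.mk (cwSetoid A) v) X.box = v.1 X.box := by
  rcases hX with hX | ⟨B, hB, rfl⟩
  · exact ⟨(vbar_mk A v hX).1, (vbar_mk A v hX).2.1⟩
  · exact ⟨(vbar_mk A v hB).2.1, (vbar_mk A v hB).2.2⟩

def Dbar (x : FW A) (S : Set (FW A)) : Prop :=
  S = Set.univ ∨ ∃ X, Wit A X ∧ vbar A x X.box = true ∧ tset A X ⊆ S

lemma Dbar_univ (x : FW A) : Dbar A x Set.univ := Or.inl rfl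

lemma Dbar_mono {x : FW A} {S S' : Set (FW A)} (h : Dbar A x S) (hs : S ⊆ S') :
    Dbar A x S' := by
  rcases h with rfl | ⟨X, hw, hb, hsub⟩
  · exact Or.inl (Set.univ_subset_iff.1 hs)
  · exact Or.inr ⟨X, hw, hb, hsub.trans hs⟩

lemma vbar_boxbox {x : FW A} {X : Fml} (h : vbar A x X.box = true) :
    vbar A x X.box.box = true :=
  val_box4 (vbar_good A x) (vbar_thm A x) h

lemma tset_nonempty {x : FW A} {X : Fml} (hw : Wit A X)
    (hb : vbar A x X.box = true) : (tset A X).Nonempty := by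
  obtain ⟨w, hgw, htw, hwX⟩ := box_nonempty (vbar_good A x) (vbar_thm A x) hb
  refine ⟨Quotient.mk (cwSetoid A) ⟨w, hgw, htw⟩, ?_⟩
  show vbar A _ X = true
  rw [(vbar_mk_wit A ⟨w, hgw, htw⟩ hw).1]
  exact hwX

lemma Dbar_notboth {x : FW A} {S : Set (FW A)}
    (h1 : Dbar A x S) (h2 : Dbar A x Sᶜ) : False := by
  rcases h1 with rfl | ⟨X, hwX, hbX, hsubX⟩
  · rcases h2 with h2 | ⟨Y, hwY, hbY, hsubY⟩
    · have hx : (x : FW A) ∈ (Set.univ : Set (FW A))ᶜ := by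
        rw [h2]; exact Set.mem_univ x
      exact hx (Set.mem_univ x)
    · obtain ⟨y, hy⟩ := tset_nonempty A hwY hbY
      exact (hsubY hy) (Set.mem_univ y)
  · rcases h2 with h2 | ⟨Y, hwY, hbY, hsubY⟩
    · obtain ⟨y, hy⟩ := tset_nonempty A hwX hbX
      have hyS : y ∈ S := hsubX hy
      have hyc : y ∈ Sᶜ := by rw [h2]; exact Set.mem_univ y
      exact hyc hyS
    · obtain ⟨w, hgw, htw, hwX', hwY'⟩ :=
        clash (vbar_good A x) (vbar_thm A x) hbX hbY
      set y := Quotient.mk (cwSetoid A) (⟨w, hgw, htw⟩ : CW)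
      have hyX : y ∈ tset A X := by
        show vbar A y X = true
        rw [(vbar_mk_wit A ⟨w, hgw, htw⟩ hwX).1]; exact hwX'
      have hyY : y ∈ tset A Y := by
        show vbar A y Y = true
        rw [(vbar_mk_wit A ⟨w, hgw, htw⟩ hwY).1]; exact hwY'
      exact (hsubY hyY) (hsubX hyX)

lemma Dbar_4 {x : FW A} {S : Set (FW A)} (h : Dbar A x S) :
    Dbar A x {y | Dbar A y S} := by
  rcases h with rfl | ⟨X, hw, hb, hsub⟩
  · exact Or.inl (Set.eq_univ_of_forall fun y => Or.inl rfl)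
  · have hT : tset A X.box ⊆ {y | Dbar A y S} := by
      intro y hy
      exact Or.inr ⟨X, hw, hy, hsub⟩
    rcases hw with hX | ⟨B, hB, rfl⟩
    · exact Or.inr ⟨X.box, Or.inr ⟨X, hX, rfl⟩, vbar_boxbox A hb, hT⟩
    · refine Or.inr ⟨B.box, Or.inr ⟨B, hB, rfl⟩, hb, ?_⟩
      intro y hy
      exact hT (vbar_boxbox A hy)

lemma truthD {x : FW A} {C : Fml} (hC : C ∈ subf A) :
    vbar A x C.box = true ↔ Dbar A x (tset A C) := by
  constructor
  · intro h
    exact Or.inr ⟨C, Or.inl hC, h, Set.Subset.rfl⟩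
  · intro h
    rcases h with h | ⟨X, hw, hb, hsub⟩
    · apply box_of_all (vbar_good A x) (vbar_thm A x)
      intro w hgw htw
      have : Quotient.mk (cwSetoid A) (⟨w, hgw, htw⟩ : CW) ∈ tset A C := by
        rw [h]; exact Set.mem_univ _
      have hv : vbar A (Quotient.mk (cwSetoid A) ⟨w, hgw, htw⟩) C = true := this
      rw [(vbar_mk A ⟨w, hgw, htw⟩ hC).1] at hv
      exact hv
    · apply box_mono_sem (vbar_good A x) (vbar_thm A x) hb
      intro w hgw htw hwX
      have hmem : Quotient.mk (cwSetoid A) (⟨w, hgw, htw⟩ : CW) ∈ tset A X := by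
        show vbar A _ X = true
        rw [(vbar_mk_wit A ⟨w, hgw, htw⟩ hw).1]; exact hwX
      have hv : vbar A (Quotient.mk (cwSetoid A) ⟨w, hgw, htw⟩) C = true := hsub hmem
      rw [(vbar_mk A ⟨w, hgw, htw⟩ hC).1] at hv
      exact hv

def relbar (x : FW A) (V : Set (FW A)) : Prop := ¬ Dbar A x Vᶜ

lemma box_iff (x : FW A) (T : Set (FW A)) :
    (∀ V, relbar A x V → ∃ y ∈ V, y ∈ T) ↔ Dbar A x T := by
  constructor
  · intro h
    by_contra hD
    obtain ⟨y, hy1, hy2⟩ := h Tᶜ (by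
      show ¬ Dbar A x Tᶜᶜ
      rw [compl_compl]; exact hD)
    exact hy1 hy2
  · intro hD V hV
    by_contra hno
    push_neg at hno
    apply hV
    apply Dbar_mono A hD
    intro y hy
    exact fun hyV => hno y hyV hy

noncomputable def Fbar (x0 : FW A) : MNFrame (FW A) where
  nonempty := ⟨x0⟩
  rel := relbar A
  rel_nonempty := by
    intro x V h
    rw [Set.nonempty_iff_ne_empty]
    rintro rfl
    exact h (by rw [Set.compl_empty]; exact Dbar_univ A x)
  mono := by
    intro x V U hV hsub hD
    exact hV (Dbar_mono A hD (Set.compl_subset_compl.2 hsub))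

lemma Fbar_trans (x0 : FW A) : (Fbar A x0).IsTransitive := by
  intro x V U h1 h2 hcon
  have h4 := Dbar_4 A hcon
  apply h1
  apply Dbar_mono A h4
  intro z hz hzV
  apply h2 z hzV
  apply Dbar_mono A hz
  exact Set.compl_subset_compl.2 (Set.subset_biUnion_of_mem hzV)

lemma Fbar_mnd (x0 : FW A) : (Fbar A x0).IsMND := by
  intro x V
  by_contra h
  push_neg at h
  obtain ⟨h1, h2⟩ := h
  have h1' : Dbar A x Vᶜ := not_not.1 h1
  have h2' : Dbar A x Vᶜᶜ := not_not.1 h2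
  exact Dbar_notboth A h1' h2'

def SB : Fml → FW A → Prop
  | .var n, x => vbar A x (.var n) = true
  | .bot, _ => False
  | .imp B C, x => SB B x → SB C x
  | .box B, x => ∀ V, relbar A x V → ∃ y ∈ V, SB B y

lemma truth : ∀ B : Fml, B ∈ subf A → ∀ x : FW A, SB A B x ↔ vbar A x B = true := by
  intro B
  induction B with
  | var n => intro _ x; exact Iff.rfl
  | bot =>
    intro _ x
    have hb : vbar A x Fml.bot = false := (vbar_good A x).1
    simp [SB, hb]
  | imp B C ihB ihC =>
    intro h x
    obtain ⟨hB, hC⟩ := mem_subf_imp h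
    show (SB A B x → SB A C x) ↔ _
    rw [ihB hB x, ihC hC x, (vbar_good A x).2 B C]
    cases vbar A x B <;> cases vbar A x C <;> simp
  | box C ih =>
    intro h x
    have hC := mem_subf_box h
    show (∀ V, relbar A x V → ∃ y ∈ V, SB A C y) ↔ _
    rw [truthD A hC]
    rw [← box_iff A x (tset A C)]
    constructor
    · intro hb V hV
      obtain ⟨y, hy1, hy2⟩ := hb V hV
      exact ⟨y, hy1, (ih hC y).1 hy2⟩
    · intro hb V hV
      obtain ⟨y, hy1, hy2⟩ := hb V hV
      exact ⟨y, hy1, (ih hC y).2 hy2⟩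

lemma FW_finite : Finite (FW A) := by
  have hfin : Finite {B // B ∈ subf A} := (List.finite_toSet (subf A)).to_subtype
  apply Finite.of_injective
    (fun (x : FW A) => fun (b : {B // B ∈ subf A}) =>
      (vbar A x b.1, vbar A x b.1.box, vbar A x b.1.box.box))
  intro x y hxy
  rw [← Quotient.out_eq x, ← Quotient.out_eq y]
  apply Quotient.sound
  intro B hB
  have := congrFun hxy ⟨B, hB⟩
  simp only [Prod.mk.injEq] at this
  exact ⟨this.1, this.2.1, this.2.2⟩

lemma completeness (hval : ∀ (W : Type) (F : MNFrame W),
    Finite W → F.IsTransitive → F.IsMND → Valid F A) : MNDF A := by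
  by_contra hA
  obtain ⟨v, hg, ht, hvA⟩ := exists_val hA
  let v0 : CW := ⟨v, hg, ht⟩
  let x0 : FW A := Quotient.mk (cwSetoid A) v0
  have hfin : Finite (FW A) := FW_finite A
  have hsat : IsSat (Fbar A x0) (fun x B => SB A B x) := by
    refine ⟨fun x h => h, fun x B C => Iff.rfl, fun x B => Iff.rfl⟩
  have hAx0 : SB A A x0 :=
    hval (FW A) (Fbar A x0) hfin (Fbar_trans A x0) (Fbar_mnd A x0) _ hsat x0
  rw [truth A A (self_mem_subf A) x0] at hAx0
  rw [(vbar_mk A v0 (self_mem_subf A)).1] at hAx0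
  have hAv : v A = true := hAx0
  rw [hAv] at hvA
  simp at hvA

/-! #### Soundness -/

lemma sat_neg {W : Type} {F : MNFrame W} {Sat : W → Fml → Prop}
    (hS : IsSat F Sat) (x : W) (Z : Fml) : Sat x Z.neg ↔ ¬ Sat x Z := by
  show Sat x (Z.imp Fml.bot) ↔ _
  rw [hS.imp]
  exact ⟨fun h hz => hS.bot x (h hz), fun h hz => absurd hz h⟩

lemma sat_and {W : Type} {F : MNFrame W} {Sat : W → Fml → Prop}
    (hS : IsSat F Sat) (x : W) (P Q : Fml) : Sat x (P.and Q) ↔ (Sat x P ∧ Sat x Q) := by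
  show Sat x ((P.imp Q.neg).neg) ↔ _
  rw [sat_neg hS, hS.imp, sat_neg hS]
  tauto

lemma soundness {A : Fml} (h : MNDF A) :
    ∀ (W : Type) (F : MNFrame W), F.IsTransitive → F.IsMND → Valid F A := by
  have h' : MNProv (fun B => AxD B ∨ AxF B) A := h
  clear h
  induction h' with
  | @taut B htB =>
    intro W F htr hmnd Sat hS x
    classical
    set val : Fml → Bool := fun C => if Sat x C then true else false with hvaldef
    have hbot : val Fml.bot = false := if_neg (hS.bot x)
    have himp : ∀ P Q : Fml, val (P.imp Q) = (!(val P) || val Q) := by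
      intro P Q
      by_cases hP : Sat x P <;> by_cases hQ : Sat x Q
      · rw [show val (P.imp Q) = true from if_pos ((hS.imp x P Q).2 (fun _ => hQ)),
          show val P = true from if_pos hP, show val Q = true from if_pos hQ]; rfl
      · rw [show val (P.imp Q) = false from
          if_neg (fun hi => hQ ((hS.imp x P Q).1 hi hP)),
          show val P = true from if_pos hP, show val Q = false from if_neg hQ]; rfl
      · rw [show val (P.imp Q) = true from if_pos ((hS.imp x P Q).2 (fun _ => hQ)),
          show val P = false from if_neg hP]; rfl
      · rw [show val (P.imp Q) = true from
          if_pos ((hS.imp x P Q).2 (fun hp => absurd hp hP)),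
          show val P = false from if_neg hP]; rfl
    have := htB val hbot himp
    by_contra hn
    rw [show val B = false from if_neg hn] at this
    simp at this
  | @ax B hB =>
    rcases hB with ⟨C, rfl⟩ | ⟨C, rfl⟩
    · intro W F htr hmnd Sat hS x
      rw [sat_neg hS, sat_and hS]
      rintro ⟨h1, h2⟩
      rcases hmnd x {y | Sat y C} with hrel | hrel
      · obtain ⟨y, hy1, hy2⟩ := (hS.box x C.neg).1 h2 _ hrel
        exact (sat_neg hS y C).1 hy2 hy1
      · obtain ⟨y, hy1, hy2⟩ := (hS.box x C).1 h1 _ hrel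
        exact hy1 hy2
    · intro W F htr hmnd Sat hS x
      rw [hS.imp]
      intro h1
      rw [hS.box]
      intro V hV
      by_contra hno
      push_neg at hno
      have hch : ∀ y ∈ V, ∃ U : Set W, F.rel y U ∧ ∀ z ∈ U, ¬ Sat z C := by
        intro y hy
        have := hno y hy
        rw [hS.box] at this
        push_neg at this
        exact this
      classical
      choose U hU1 hU2 using hch
      set U' : W → Set W := fun y => if hy : y ∈ V then U y hy else ∅ with hU'def
      have htr' := htr x V U' hV (by
        intro y hy
        show F.rel y (U' y)
        rw [show U' y = U y hy from dif_pos hy]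
        exact hU1 y hy)
      obtain ⟨z, hz1, hz2⟩ := (hS.box x C).1 h1 _ htr'
      rw [Set.mem_iUnion₂] at hz1
      obtain ⟨y, hy, hzy⟩ := hz1
      rw [show U' y = U y hy from dif_pos hy] at hzy
      exact hU2 y hy z hzy hz2
  | @mp B C h1 h2 ih1 ih2 =>
    intro W F htr hmnd Sat hS x
    exact (hS.imp x B C).1 (ih1 W F htr hmnd Sat hS x) (ih2 W F htr hmnd Sat hS x)
  | @nec B h ih =>
    intro W F htr hmnd Sat hS x
    rw [hS.box]
    intro V hV
    obtain ⟨y, hy⟩ := F.rel_nonempty x V hV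
    exact ⟨y, hy, ih W F htr hmnd Sat hS y⟩
  | @rm B C h ih =>
    intro W F htr hmnd Sat hS x
    rw [hS.imp]
    intro h1
    rw [hS.box]
    intro V hV
    obtain ⟨y, hy1, hy2⟩ := (hS.box x B).1 h1 V hV
    exact ⟨y, hy1, (hS.imp y B C).1 (ih W F htr hmnd Sat hS y) hy2⟩

end Stmt10


/-- A formula is a theorem of MNDF iff it is valid in all transitive
MND-frames iff it is valid in all finite transitive MND-frames. -/
theorem stmt10 (A : Fml) :
    (MNDF A ↔ ∀ (W : Type) (F : MNFrame W), F.IsTransitive → F.IsMND → Valid F A) ∧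
    (MNDF A ↔ ∀ (W : Type) (F : MNFrame W), Finite W → F.IsTransitive → F.IsMND → Valid F A) := by
  have snd := @Stmt10.soundness A
  have comp := Stmt10.completeness A
  constructor
  · exact ⟨fun h W F ht hd => snd h W F ht hd,
      fun h => comp (fun W F _ ht hd => h W F ht hd)⟩
  · exact ⟨fun h W F _ ht hd => snd h W F ht hd, comp⟩
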